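/- Let 𝔫 be a graded nilpotent Lie algebra generated by 𝔫_{-1}, let V = ⊕_{i=1}^{s} V_{-i} be a graded 𝔫-module on which [𝔫,𝔫] and a codimension-1 subspace W ⊆ 𝔫_{-1} act trivially, with dim V_{-i} = 1 for all i and V_{-i-1} = 𝔫_{-1}·V_{-i}, where s ≥ 2. Let 𝔪 be any Lie algebra extension 0 → V → 𝔪 → 𝔫 → 0 with V a commutative ideal. Then any non-zero y ∈ V_{-1} satisfies rank(ad_𝔪 y) = 1. -/
import Mathlib


open Module LinearMap

/-- if `𝔪` is a special extension of a GNLA `𝔫` by a graded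
commutative ideal `V = ⊕_{i=1}^{s} V_{-i}` with `dim V_{-i} = 1`,
`V_{-i-1} = 𝔫_{-1}·V_{-i}`, `s ≥ 2`, on which `[𝔫,𝔫]` (and a codimension-one
subspace `W ⊆ 𝔫_{-1}`) acts trivially, then any non-zero `y ∈ V_{-1}` has
`rank (ad_𝔪 y) = 1`. (The pieces `V i` sit inside `𝔪`; `⁅z, V i⁆ ⊆ V (i+1)`
encodes that the ideal `V` is graded with only the degree `-1` part of `𝔫`
acting non-trivially.) -/
theorem stmt6 {k M : Type*} [Field k] [CharZero k] [LieRing M] [LieAlgebra k M]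
    (V : ℕ → Submodule k M) (s : ℕ) (hs : 2 ≤ s)
    (hV0 : V 0 = ⊥) (hVtop : ∀ i, s < i → V i = ⊥)
    (hdim : ∀ i, 1 ≤ i → i ≤ s → finrank k (V i) = 1)
    (habelian : ∀ i j, ∀ u ∈ V i, ∀ v ∈ V j, ⁅u, v⁆ = 0)
    (hideal : ∀ z : M, ∀ i, ∀ v ∈ V i, ⁅z, v⁆ ∈ V (i + 1))
    (hcomm : ∀ a b : M, ∀ i, ∀ v ∈ V i, ⁅⁅a, b⁆, v⁆ = 0)
    (hgen : ∀ i, 1 ≤ i → i < s →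
      V (i + 1) = Submodule.span k {w | ∃ z : M, ∃ v ∈ V i, ⁅z, v⁆ = w}) :
    ∀ y ∈ V 1, y ≠ 0 →
      finrank k (LinearMap.range (LieAlgebra.ad k M y)) = 1 := by
  intro y hy hy0
  have hdim1 : finrank k (V 1) = 1 := hdim 1 le_rfl (by omega)
  have hdim2 : finrank k (V 2) = 1 := hdim 2 (by omega) hs
  have hfin2 : FiniteDimensional k (V 2) :=
    FiniteDimensional.of_finrank_pos (by omega)
  have hfin1 : FiniteDimensional k (V 1) :=
    FiniteDimensional.of_finrank_pos (by omega)
  -- range ⊆ V 2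
  have hrange : LinearMap.range (LieAlgebra.ad k M y) ≤ V 2 := by
    rintro w ⟨z, rfl⟩
    have : ⁅y, z⁆ = -⁅z, y⁆ := by rw [lie_skew]
    simp only [LieAlgebra.ad_apply, this]
    exact (V 2).neg_mem (hideal z 1 y hy)
  have hle : finrank k (LinearMap.range (LieAlgebra.ad k M y)) ≤ 1 := by
    rw [← hdim2]; exact Submodule.finrank_mono hrange
  -- V 1 = span of y
  have hspan : Submodule.span k {y} = V 1 := by
    apply Submodule.eq_of_le_of_finrank_le
    · rw [Submodule.span_le, Set.singleton_subset_iff]; exact hy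
    · rw [hdim1, finrank_span_singleton hy0]
  -- ad y ≠ 0
  have hne : LieAlgebra.ad k M y ≠ 0 := by
    intro h0
    have hzy : ∀ z : M, ⁅z, y⁆ = 0 := by
      intro z
      have := congrFun (congrArg DFunLike.coe h0) z
      simp only [LieAlgebra.ad_apply, LinearMap.zero_apply] at this
      rw [← neg_eq_zero, ← lie_skew, neg_neg]; exact this
    have hV2 : V 2 = ⊥ := by
      rw [hgen 1 le_rfl (by omega)]
      rw [Submodule.span_eq_bot]
      rintro w ⟨z, v, hv, rfl⟩
      rw [← hspan, Submodule.mem_span_singleton] at hv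
      obtain ⟨c, rfl⟩ := hv
      rw [lie_smul, hzy, smul_zero]
    rw [hV2] at hdim2
    simp at hdim2
  have hpos : 0 < finrank k (LinearMap.range (LieAlgebra.ad k M y)) := by
    have : FiniteDimensional k (LinearMap.range (LieAlgebra.ad k M y)) :=
      Submodule.finiteDimensional_of_le hrange
    rw [Nat.pos_iff_ne_zero]
    intro h
    apply hne
    rw [← LinearMap.range_eq_bot]
    exact Submodule.finrank_eq_zero.mp h
  omega
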